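/- Let ξ : [0,1] → ℝ be given by a power series ξ(q) = Σ_{k≥2} c_k q^k with nonnegative coefficients (convergent at 1, not identically zero). Then sup over nondecreasing absolutely continuous p : [0,1] → [0,1] with p(1) = 1 of ∫₀¹ ((p ξ')'(q))^{1/2} dq equals ∫₀¹ ξ''(q)^{1/2} dq, attained at p ≡ 1. In particular, for every such p and every t ∈ [0,1], ∫_t¹ (p ξ')'(q) dq ≥ ∫_t¹ ξ''(q) dq (so (p ξ')' majorizes ξ''), and by concavity of the square root this forces ∫₀¹ ((p ξ')'(q))^{1/2} dq ≤ ∫₀¹ ξ''(q)^{1/2} dq. -/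

import Mathlib

open MeasureTheory
open scoped BigOperators

/-- The single-species mixture function `ξ(q) = Σ_{k≥2} c_k q^k`, here written with
coefficients `c : ℕ → ℝ` via `ξ(q) = Σ_{k≥0} c k · q^(k+2)`. -/
noncomputable def xiOne (c : ℕ → ℝ) (q : ℝ) : ℝ := ∑' k : ℕ, c k * q ^ (k + 2)

/-- Its first derivative `ξ'(q) = Σ_k (k+2) c_k q^(k+1)`. -/
noncomputable def xiOne' (c : ℕ → ℝ) (q : ℝ) : ℝ := ∑' k : ℕ, ((k : ℝ) + 2) * c k * q ^ (k + 1)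

/-- Its second derivative `ξ''(q) = Σ_k (k+2)(k+1) c_k q^k`. -/
noncomputable def xiOne'' (c : ℕ → ℝ) (q : ℝ) : ℝ :=
  ∑' k : ℕ, ((k : ℝ) + 2) * ((k : ℝ) + 1) * c k * q ^ k

section AuxVP

set_option linter.unusedSectionVars false

variable {c : ℕ → ℝ} (hc : ∀ k, 0 ≤ c k)
    (hsum : Summable (fun k : ℕ => ((k : ℝ) + 2) * ((k : ℝ) + 1) * c k))
include hc hsum

lemma VP.term2_nonneg (k : ℕ) {q : ℝ} (h0 : 0 ≤ q) :
    0 ≤ ((k : ℝ) + 2) * ((k : ℝ) + 1) * c k * q ^ k :=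
  mul_nonneg (mul_nonneg (mul_nonneg (by positivity) (by positivity)) (hc k)) (pow_nonneg h0 _)

lemma VP.term1_nonneg (k : ℕ) {q : ℝ} (h0 : 0 ≤ q) :
    0 ≤ ((k : ℝ) + 2) * c k * q ^ (k + 1) :=
  mul_nonneg (mul_nonneg (by positivity) (hc k)) (pow_nonneg h0 _)

lemma VP.summable2 {q : ℝ} (h0 : 0 ≤ q) (h1 : q ≤ 1) :
    Summable fun k : ℕ => ((k : ℝ) + 2) * ((k : ℝ) + 1) * c k * q ^ k := by
  refine Summable.of_nonneg_of_le (fun k => VP.term2_nonneg hc hsum k h0) (fun k => ?_) hsum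
  have h2 : q ^ k ≤ 1 := pow_le_one₀ h0 h1
  have h3 : (0:ℝ) ≤ ((k:ℝ) + 2) * ((k:ℝ) + 1) * c k :=
    mul_nonneg (mul_nonneg (by positivity) (by positivity)) (hc k)
  nlinarith

lemma VP.xi2_nonneg {q : ℝ} (h0 : 0 ≤ q) : 0 ≤ xiOne'' c q :=
  tsum_nonneg fun k => VP.term2_nonneg hc hsum k h0

lemma VP.xi1_nonneg {q : ℝ} (h0 : 0 ≤ q) : 0 ≤ xiOne' c q :=
  tsum_nonneg fun k => VP.term1_nonneg hc hsum k h0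

lemma VP.xi2_mono {s q : ℝ} (h0 : 0 ≤ s) (hsq : s ≤ q) (h1 : q ≤ 1) :
    xiOne'' c s ≤ xiOne'' c q := by
  refine Summable.tsum_le_tsum (fun k => ?_) (VP.summable2 hc hsum h0 (hsq.trans h1))
    (VP.summable2 hc hsum (h0.trans hsq) h1)
  have h2 : s ^ k ≤ q ^ k := pow_le_pow_left₀ h0 hsq k
  have h3 : (0:ℝ) ≤ ((k:ℝ)+2) * ((k:ℝ)+1) * c k :=
    mul_nonneg (mul_nonneg (by positivity) (by positivity)) (hc k)
  nlinarith

lemma VP.xi2_cont : ContinuousOn (xiOne'' c) (Set.Icc 0 1) := by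
  refine continuousOn_tsum (fun k => (by fun_prop :
    Continuous fun q : ℝ => ((k : ℝ) + 2) * ((k : ℝ) + 1) * c k * q ^ k).continuousOn)
    hsum (fun k q hq => ?_)
  rcases hq with ⟨h0, h1⟩
  rw [Real.norm_eq_abs, abs_of_nonneg (VP.term2_nonneg hc hsum k h0)]
  have h2 : q ^ k ≤ 1 := pow_le_one₀ h0 h1
  have h3 : (0:ℝ) ≤ ((k:ℝ) + 2) * ((k:ℝ) + 1) * c k :=
    mul_nonneg (mul_nonneg (by positivity) (by positivity)) (hc k)
  nlinarith

lemma VP.xi1_cont : ContinuousOn (xiOne' c) (Set.Icc 0 1) := by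
  refine continuousOn_tsum (fun k => (by fun_prop :
    Continuous fun q : ℝ => ((k : ℝ) + 2) * c k * q ^ (k+1)).continuousOn)
    hsum (fun k q hq => ?_)
  rcases hq with ⟨h0, h1⟩
  rw [Real.norm_eq_abs, abs_of_nonneg (VP.term1_nonneg hc hsum k h0)]
  have h2 : q ^ (k+1) ≤ 1 := pow_le_one₀ h0 h1
  have h3 : (0:ℝ) ≤ ((k:ℝ) + 2) * c k := mul_nonneg (by positivity) (hc k)
  have h4 : (0:ℝ) ≤ (k:ℝ) := Nat.cast_nonneg k
  nlinarith [pow_nonneg h0 (k+1)]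

lemma VP.xi1_eq_integral {q : ℝ} (h0 : 0 ≤ q) (h1 : q ≤ 1) :
    xiOne' c q = ∫ s in (0:ℝ)..q, xiOne'' c s := by
  rw [intervalIntegral.integral_of_le h0]
  have key : ∑' k : ℕ, (∫ s in Set.Ioc (0:ℝ) q, ((k:ℝ)+2)*((k:ℝ)+1)*c k * s^k)
      = ∫ s in Set.Ioc (0:ℝ) q, xiOne'' c s := by
    apply integral_tsum_of_summable_integral_norm
    · intro k
      exact (by fun_prop :
        Continuous fun s : ℝ => ((k:ℝ)+2)*((k:ℝ)+1)*c k * s^k).integrableOn_Ioc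
    · refine Summable.of_nonneg_of_le
        (fun k => integral_nonneg fun s => norm_nonneg _) (fun k => ?_) hsum
      set A : ℝ := ((k:ℝ)+2)*((k:ℝ)+1)*c k with hA
      have hA0 : 0 ≤ A := mul_nonneg (mul_nonneg (by positivity) (by positivity)) (hc k)
      calc ∫ s in Set.Ioc (0:ℝ) q, ‖A * s^k‖
          ≤ ∫ _s in Set.Ioc (0:ℝ) q, A := by
            refine setIntegral_mono_on ?_ ?_ measurableSet_Ioc ?_
            · exact (by fun_prop : Continuous fun s : ℝ => ‖A * s^k‖).integrableOn_Ioc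
            · exact integrableOn_const measure_Ioc_lt_top.ne
            · intro s hs
              rw [Real.norm_eq_abs, abs_of_nonneg (mul_nonneg hA0 (pow_nonneg hs.1.le k))]
              have : s ^ k ≤ 1 := pow_le_one₀ hs.1.le (hs.2.trans h1)
              nlinarith
        _ = A * (volume (Set.Ioc (0:ℝ) q)).toReal := by
            rw [setIntegral_const]; ring_nf; rfl
        _ ≤ A := by
            rw [Real.volume_Ioc]
            have : (ENNReal.ofReal (q - 0)).toReal ≤ 1 := by
              rw [ENNReal.toReal_ofReal (by linarith)]; linarith
            nlinarith
  rw [← key]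
  unfold xiOne'
  refine tsum_congr fun k => ?_
  rw [← intervalIntegral.integral_of_le h0, intervalIntegral.integral_const_mul,
    integral_pow]
  have hk : ((k:ℝ) + 1) ≠ 0 := by positivity
  push_cast
  field_simp
  ring

lemma VP.xi1_le {q : ℝ} (h0 : 0 ≤ q) (h1 : q ≤ 1) :
    xiOne' c q ≤ (∫ s in (0:ℝ)..q, Real.sqrt (xiOne'' c s)) * Real.sqrt (xiOne'' c q) := by
  rw [VP.xi1_eq_integral hc hsum h0 h1, ← intervalIntegral.integral_mul_const]
  have hsub : Set.uIcc (0:ℝ) q ⊆ Set.Icc 0 1 := by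
    rw [Set.uIcc_of_le h0]; exact Set.Icc_subset_Icc_right h1
  refine intervalIntegral.integral_mono_on h0 ?_ ?_ ?_
  · exact ((VP.xi2_cont hc hsum).mono hsub).intervalIntegrable
  · exact (((Real.continuous_sqrt.comp_continuousOn (VP.xi2_cont hc hsum)).mono hsub).mul
      continuousOn_const).intervalIntegrable
  · intro s hs
    have hs1 : s ≤ 1 := hs.2.trans h1
    calc xiOne'' c s = Real.sqrt (xiOne'' c s) * Real.sqrt (xiOne'' c s) :=
          (Real.mul_self_sqrt (VP.xi2_nonneg hc hsum hs.1)).symm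
      _ ≤ Real.sqrt (xiOne'' c s) * Real.sqrt (xiOne'' c q) :=
          mul_le_mul_of_nonneg_left
            (Real.sqrt_le_sqrt (VP.xi2_mono hc hsum hs.1 hs.2 h1)) (Real.sqrt_nonneg _)

end AuxVP

lemma VP.sqrt_lin {a b : ℝ} (ha : 0 < a) (hab : 0 ≤ a + b) :
    Real.sqrt (a + b) ≤ Real.sqrt a + b / (2 * Real.sqrt a) := by
  have hsa : 0 < Real.sqrt a := Real.sqrt_pos.2 ha
  have hb : -a ≤ b := by linarith
  have h1 : Real.sqrt (a + b) * Real.sqrt a ≤ a + b / 2 := by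
    rw [← Real.sqrt_mul hab]
    have h2 : (a + b) * a ≤ (a + b / 2) ^ 2 := by nlinarith [sq_nonneg b]
    calc Real.sqrt ((a + b) * a) ≤ Real.sqrt ((a + b / 2) ^ 2) := Real.sqrt_le_sqrt h2
      _ = a + b / 2 := Real.sqrt_sq (by linarith)
  have h3 : Real.sqrt (a + b) ≤ (a + b / 2) / Real.sqrt a := by
    rw [le_div_iff₀ hsa]; exact h1
  calc Real.sqrt (a + b) ≤ (a + b / 2) / Real.sqrt a := h3
    _ = a / Real.sqrt a + b / (2 * Real.sqrt a) := by ring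
    _ = Real.sqrt a + b / (2 * Real.sqrt a) := by rw [Real.div_sqrt]

lemma VP.fubini_swap (g p p' : ℝ → ℝ)
    (hg : IntegrableOn g (Set.Icc (0:ℝ) 1))
    (hp'int : IntegrableOn p' (Set.Icc (0:ℝ) 1))
    (hrep : ∀ q ∈ Set.Icc (0:ℝ) 1, p q = p 0 + ∫ t in (0:ℝ)..q, p' t)
    (hp1 : p 1 = 1) :
    ∫ q in (0:ℝ)..1, p' q * (∫ s in (0:ℝ)..q, g s)
      = ∫ s in (0:ℝ)..1, g s * (1 - p s) := by
  set μ : Measure ℝ := volume.restrict (Set.Ioc (0:ℝ) 1) with hμ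
  have hp'μ : Integrable p' μ := hp'int.mono_set Set.Ioc_subset_Icc_self
  have hgμ : Integrable g μ := hg.mono_set Set.Ioc_subset_Icc_self
  set f : ℝ → ℝ → ℝ := fun q s => Set.indicator {z : ℝ × ℝ | z.2 ≤ z.1}
    (fun z => p' z.1 * g z.2) (q, s) with hf
  have hFint : Integrable (Function.uncurry f) (μ.prod μ) := by
    have h1 : Integrable (fun z : ℝ × ℝ => p' z.1 * g z.2) (μ.prod μ) :=
      Integrable.mul_prod hp'μ hgμ
    have h2 := h1.indicator (s := {z : ℝ × ℝ | z.2 ≤ z.1})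
      (measurableSet_le measurable_snd measurable_fst)
    convert h2 using 1
    all_goals rfl
  have hswap := integral_integral_swap hFint
  have hL : ∀ q ∈ Set.Ioc (0:ℝ) 1, (∫ s, f q s ∂μ) = p' q * ∫ s in (0:ℝ)..q, g s := by
    intro q hq
    have he : (fun s => f q s) = fun s => Set.indicator (Set.Iic q) (fun s => p' q * g s) s := by
      funext s
      simp only [hf, Set.indicator_apply, Set.mem_setOf_eq, Set.mem_Iic]
    rw [he, integral_indicator measurableSet_Iic, hμ,
      Measure.restrict_restrict measurableSet_Iic]
    have hset : Set.Iic q ∩ Set.Ioc 0 1 = Set.Ioc 0 q := by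
      ext s
      simp only [Set.mem_inter_iff, Set.mem_Iic, Set.mem_Ioc]
      constructor
      · rintro ⟨h1, h2, h3⟩; exact ⟨h2, h1⟩
      · rintro ⟨h1, h2⟩; exact ⟨h2, h1, h2.trans hq.2⟩
    rw [hset, intervalIntegral.integral_of_le hq.1.le, integral_const_mul]
  have hR : ∀ s ∈ Set.Ioc (0:ℝ) 1, (∫ q, f q s ∂μ) = g s * (1 - p s) := by
    intro s hs
    have he : (fun q => f q s) = fun q => Set.indicator (Set.Ici s) (fun q => p' q * g s) q := by
      funext q
      simp only [hf, Set.indicator_apply, Set.mem_setOf_eq, Set.mem_Ici]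
    rw [he, integral_indicator measurableSet_Ici, hμ,
      Measure.restrict_restrict measurableSet_Ici]
    have hset : Set.Ici s ∩ Set.Ioc 0 1 = Set.Icc s 1 := by
      ext q
      simp only [Set.mem_inter_iff, Set.mem_Ici, Set.mem_Ioc, Set.mem_Icc]
      constructor
      · rintro ⟨h1, _, h3⟩; exact ⟨h1, h3⟩
      · rintro ⟨h1, h2⟩; exact ⟨h1, hs.1.trans_le h1, h2⟩
    have hii : ∫ t in Set.Icc s 1, p' t * g s = (∫ t in (s:ℝ)..1, p' t) * g s := by
      rw [integral_Icc_eq_integral_Ioc, intervalIntegral.integral_of_le hs.2,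
        integral_mul_const]
    rw [hset, hii]
    have i0s : IntervalIntegrable p' volume 0 s :=
      (hp'int.mono_set (by
        rw [Set.uIcc_of_le hs.1.le]; exact Set.Icc_subset_Icc_right hs.2)).intervalIntegrable
    have is1 : IntervalIntegrable p' volume s 1 :=
      (hp'int.mono_set (by
        rw [Set.uIcc_of_le hs.2]; exact Set.Icc_subset_Icc_left hs.1.le)).intervalIntegrable
    have hadj := intervalIntegral.integral_add_adjacent_intervals i0s is1
    have hps := hrep s ⟨hs.1.le, hs.2⟩
    have hp11 := hrep 1 ⟨zero_le_one, le_refl 1⟩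
    rw [hp1] at hp11
    have : (∫ t in (s:ℝ)..1, p' t) = 1 - p s := by linarith
    rw [this]; ring
  calc ∫ q in (0:ℝ)..1, p' q * (∫ s in (0:ℝ)..q, g s)
      = ∫ q, (∫ s, f q s ∂μ) ∂μ := by
        rw [intervalIntegral.integral_of_le zero_le_one, hμ]
        exact (setIntegral_congr_fun measurableSet_Ioc hL).symm
    _ = ∫ s, (∫ q, f q s ∂μ) ∂μ := hswap
    _ = ∫ s in (0:ℝ)..1, g s * (1 - p s) := by
        rw [intervalIntegral.integral_of_le zero_le_one, hμ]
        exact setIntegral_congr_fun measurableSet_Ioc hR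

theorem stmt_7 (c : ℕ → ℝ) (hc : ∀ k, 0 ≤ c k)
    (hsum : Summable (fun k : ℕ => ((k : ℝ) + 2) * ((k : ℝ) + 1) * c k))
    (hne : ∃ k, 0 < c k) :
    IsGreatest
      {E : ℝ | ∃ p p' : ℝ → ℝ,
        (∀ q ∈ Set.Icc (0:ℝ) 1, p q ∈ Set.Icc (0:ℝ) 1) ∧
        p 1 = 1 ∧
        (∀ q, 0 ≤ p' q) ∧
        IntegrableOn p' (Set.Icc (0:ℝ) 1) ∧
        (∀ q ∈ Set.Icc (0:ℝ) 1, p q = p 0 + ∫ t in (0:ℝ)..q, p' t) ∧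
        E = ∫ q in (0:ℝ)..1, Real.sqrt (p' q * xiOne' c q + p q * xiOne'' c q)}
      (∫ q in (0:ℝ)..1, Real.sqrt (xiOne'' c q)) := by
  constructor
  · -- membership: p ≡ 1, p' ≡ 0
    refine ⟨fun _ => 1, fun _ => 0, ?_, rfl, fun _ => le_refl 0, ?_, ?_, ?_⟩
    · intro q _; exact ⟨zero_le_one, le_refl 1⟩
    · exact integrableOn_const measure_Icc_lt_top.ne
    · intro q _; simp
    · congr 1; funext q; norm_num
  · -- upper bound
    rintro E ⟨p, p', hp01, hp1, hp'0, hp'int, hrep, rfl⟩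
    set s2 : ℝ → ℝ := fun s => Real.sqrt (xiOne'' c s) with hs2
    set Φ : ℝ → ℝ := fun q => ∫ s in (0:ℝ)..q, s2 s with hΦ
    have s2cont : ContinuousOn s2 (Set.Icc 0 1) :=
      Real.continuous_sqrt.comp_continuousOn (VP.xi2_cont hc hsum)
    have s2int : IntegrableOn s2 (Set.Icc (0:ℝ) 1) := s2cont.integrableOn_Icc
    have s2nonneg : ∀ s, 0 ≤ s2 s := fun s => Real.sqrt_nonneg _
    -- Φ facts
    have Φnonneg : ∀ q, 0 ≤ q → 0 ≤ Φ q := fun q hq =>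
      intervalIntegral.integral_nonneg hq fun s _ => s2nonneg s
    have Φcont : ContinuousOn Φ (Set.Icc 0 1) := by
      have := intervalIntegral.continuousOn_primitive_interval
        (a := (0:ℝ)) (b := (1:ℝ)) (f := s2) (μ := volume)
        (by rw [Set.uIcc_of_le zero_le_one]; exact s2int)
      rwa [Set.uIcc_of_le zero_le_one] at this
    have Φle : ∀ q ∈ Set.Icc (0:ℝ) 1, Φ q ≤ Φ 1 := by
      intro q hq
      have i0q : IntervalIntegrable s2 volume 0 q :=
        (s2int.mono_set (by
          rw [Set.uIcc_of_le hq.1]; exact Set.Icc_subset_Icc_right hq.2)).intervalIntegrable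
      have iq1 : IntervalIntegrable s2 volume q 1 :=
        (s2int.mono_set (by
          rw [Set.uIcc_of_le hq.2]; exact Set.Icc_subset_Icc_left hq.1)).intervalIntegrable
      have hadj := intervalIntegral.integral_add_adjacent_intervals i0q iq1
      have : 0 ≤ ∫ s in q..(1:ℝ), s2 s :=
        intervalIntegral.integral_nonneg hq.2 fun s _ => s2nonneg s
      simp only [hΦ]
      linarith [hadj]
    -- measurability of p on the restricted measure
    set μ : Measure ℝ := volume.restrict (Set.Ioc (0:ℝ) 1) with hμ
    have hp'μ : Integrable p' μ := hp'int.mono_set Set.Ioc_subset_Icc_self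
    have hPcont : ContinuousOn (fun q => p 0 + ∫ t in (0:ℝ)..q, p' t) (Set.Icc 0 1) := by
      refine continuousOn_const.add ?_
      have := intervalIntegral.continuousOn_primitive_interval
        (a := (0:ℝ)) (b := (1:ℝ)) (f := p') (μ := volume)
        (by rw [Set.uIcc_of_le zero_le_one]; exact hp'int)
      rwa [Set.uIcc_of_le zero_le_one] at this
    have hp_ae : p =ᵐ[μ] fun q => p 0 + ∫ t in (0:ℝ)..q, p' t := by
      refine (ae_restrict_iff' measurableSet_Ioc).2 (Filter.Eventually.of_forall ?_)
      intro q hq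
      exact hrep q ⟨hq.1.le, hq.2⟩
    have hpmeas : AEStronglyMeasurable p μ := by
      refine AEStronglyMeasurable.congr ?_ hp_ae.symm
      exact (hPcont.mono Set.Ioc_subset_Icc_self).aestronglyMeasurable measurableSet_Ioc
    have hΦmeas : AEStronglyMeasurable Φ μ :=
      (Φcont.mono Set.Ioc_subset_Icc_self).aestronglyMeasurable measurableSet_Ioc
    have hs2meas : AEStronglyMeasurable s2 μ :=
      (s2cont.mono Set.Ioc_subset_Icc_self).aestronglyMeasurable measurableSet_Ioc
    have hs2μ : Integrable s2 μ := s2int.mono_set Set.Ioc_subset_Icc_self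
    -- integrability of p' * Φ
    have hint1 : Integrable (fun q => p' q * Φ q) μ := by
      refine Integrable.mono' (g := fun q => p' q * Φ 1) (hp'μ.mul_const _)
        (hp'μ.aestronglyMeasurable.mul hΦmeas) ?_
      refine (ae_restrict_iff' measurableSet_Ioc).2 (Filter.Eventually.of_forall ?_)
      intro q hq
      have h1 : 0 ≤ Φ q := Φnonneg q hq.1.le
      have h2 : Φ q ≤ Φ 1 := Φle q ⟨hq.1.le, hq.2⟩
      rw [Real.norm_eq_abs, abs_of_nonneg (mul_nonneg (hp'0 q) h1)]
      exact mul_le_mul_of_nonneg_left h2 (hp'0 q)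
    -- integrability of (p - 1) * s2
    have hint2 : Integrable (fun q => (p q - 1) * s2 q) μ := by
      refine Integrable.mono' (g := s2) hs2μ
        ((hpmeas.sub aestronglyMeasurable_const).mul hs2meas) ?_
      refine (ae_restrict_iff' measurableSet_Ioc).2 (Filter.Eventually.of_forall ?_)
      intro q hq
      have h1 := hp01 q ⟨hq.1.le, hq.2⟩
      rw [Real.norm_eq_abs, abs_mul, abs_of_nonneg (s2nonneg q)]
      have : |p q - 1| ≤ 1 := by
        rw [abs_le]; constructor <;> [linarith [h1.1]; linarith [h1.2]]
      nlinarith [s2nonneg q]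
    -- the pointwise bound
    set RHSf : ℝ → ℝ := fun q => s2 q + p' q * Φ q / 2 + (p q - 1) * s2 q / 2 with hRHSf
    have hstar : ∀ q ∈ Set.Icc (0:ℝ) 1,
        Real.sqrt (p' q * xiOne' c q + p q * xiOne'' c q) ≤ RHSf q := by
      intro q hq
      have hq0 := hq.1
      have hq1 := hq.2
      have hxi2 : 0 ≤ xiOne'' c q := VP.xi2_nonneg hc hsum hq0
      have hxi1 : 0 ≤ xiOne' c q := VP.xi1_nonneg hc hsum hq0
      have hp01q := hp01 q hq
      rcases eq_or_lt_of_le hxi2 with hzero | hpos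
      · -- xiOne'' c q = 0
        have hxi1z : xiOne' c q = 0 := by
          rw [VP.xi1_eq_integral hc hsum hq0 hq1]
          have : Set.EqOn (xiOne'' c) 0 (Set.uIcc 0 q) := by
            intro s hs
            rw [Set.uIcc_of_le hq0] at hs
            have h1 : xiOne'' c s ≤ xiOne'' c q := VP.xi2_mono hc hsum hs.1 hs.2 hq1
            have h2 : 0 ≤ xiOne'' c s := VP.xi2_nonneg hc hsum hs.1
            simp only [Pi.zero_apply]
            linarith [hzero.symm ▸ h1]
          rw [intervalIntegral.integral_congr this]
          simp
        rw [hxi1z, ← hzero]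
        simp only [mul_zero, add_zero, Real.sqrt_zero, hRHSf, ← hzero]
        simp only [hs2, ← hzero, Real.sqrt_zero]
        have := mul_nonneg (hp'0 q) (Φnonneg q hq0)
        linarith
      · -- 0 < xiOne'' c q
        set a : ℝ := xiOne'' c q with ha
        set b : ℝ := p' q * xiOne' c q + (p q - 1) * a with hb
        have hsa : 0 < Real.sqrt a := Real.sqrt_pos.2 hpos
        have hab : 0 ≤ a + b := by
          have : a + b = p' q * xiOne' c q + p q * a := by rw [hb]; ring
          rw [this]
          exact add_nonneg (mul_nonneg (hp'0 q) hxi1) (mul_nonneg hp01q.1 hxi2)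
        have hmain : p' q * xiOne' c q + p q * xiOne'' c q = a + b := by rw [hb, ha]; ring
        rw [hmain]
        have h1 := VP.sqrt_lin hpos hab
        have hkey : xiOne' c q ≤ Φ q * Real.sqrt a := VP.xi1_le hc hsum hq0 hq1
        have h2 : b / (2 * Real.sqrt a) ≤ p' q * Φ q / 2 + (p q - 1) * s2 q / 2 := by
          have hbs : b / (2 * Real.sqrt a)
              = p' q * xiOne' c q / (2 * Real.sqrt a) + (p q - 1) * a / (2 * Real.sqrt a) := by
            rw [hb]; ring
          rw [hbs]
          have h3 : p' q * xiOne' c q / (2 * Real.sqrt a) ≤ p' q * Φ q / 2 := by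
            have h4 : p' q * xiOne' c q ≤ p' q * (Φ q * Real.sqrt a) :=
              mul_le_mul_of_nonneg_left hkey (hp'0 q)
            have h5 : p' q * xiOne' c q / (2 * Real.sqrt a)
                ≤ p' q * (Φ q * Real.sqrt a) / (2 * Real.sqrt a) := by
              apply div_le_div_of_nonneg_right h4 (by positivity)
            calc p' q * xiOne' c q / (2 * Real.sqrt a)
                ≤ p' q * (Φ q * Real.sqrt a) / (2 * Real.sqrt a) := h5
              _ = p' q * Φ q / 2 := by field_simp
          have h6 : (p q - 1) * a / (2 * Real.sqrt a) = (p q - 1) * s2 q / 2 := by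
            rw [hs2]
            rw [show (p q - 1) * a / (2 * Real.sqrt a) = (p q - 1) * (a / Real.sqrt a) / 2 by ring,
              Real.div_sqrt]
          rw [h6]
          linarith
        calc Real.sqrt (a + b) ≤ Real.sqrt a + b / (2 * Real.sqrt a) := h1
          _ ≤ s2 q + (p' q * Φ q / 2 + (p q - 1) * s2 q / 2) := by
              have : Real.sqrt a = s2 q := rfl
              linarith
          _ = RHSf q := by rw [hRHSf]; ring
    -- integrability of RHSf and LHS
    have hRHSint : Integrable RHSf μ := by
      refine (hs2μ.add (hint1.div_const 2)).add (hint2.div_const 2)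
    have hLHSmeas : AEStronglyMeasurable
        (fun q => Real.sqrt (p' q * xiOne' c q + p q * xiOne'' c q)) μ := by
      have hxi1m : AEStronglyMeasurable (xiOne' c) μ :=
        ((VP.xi1_cont hc hsum).mono Set.Ioc_subset_Icc_self).aestronglyMeasurable
          measurableSet_Ioc
      have hxi2m : AEStronglyMeasurable (xiOne'' c) μ :=
        ((VP.xi2_cont hc hsum).mono Set.Ioc_subset_Icc_self).aestronglyMeasurable
          measurableSet_Ioc
      exact Real.continuous_sqrt.comp_aestronglyMeasurable
        ((hp'μ.aestronglyMeasurable.mul hxi1m).add (hpmeas.mul hxi2m))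
    have hLHSint : Integrable
        (fun q => Real.sqrt (p' q * xiOne' c q + p q * xiOne'' c q)) μ := by
      refine Integrable.mono' hRHSint hLHSmeas ?_
      refine (ae_restrict_iff' measurableSet_Ioc).2 (Filter.Eventually.of_forall ?_)
      intro q hq
      rw [Real.norm_eq_abs, abs_of_nonneg (Real.sqrt_nonneg _)]
      exact hstar q ⟨hq.1.le, hq.2⟩
    -- main comparison
    have hmono : (∫ q in (0:ℝ)..1, Real.sqrt (p' q * xiOne' c q + p q * xiOne'' c q))
        ≤ ∫ q in (0:ℝ)..1, RHSf q := by
      refine intervalIntegral.integral_mono_on zero_le_one ?_ ?_ hstar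
      · rw [intervalIntegrable_iff, Set.uIoc_of_le zero_le_one]; exact hLHSint
      · rw [intervalIntegrable_iff, Set.uIoc_of_le zero_le_one]; exact hRHSint
    -- compute ∫ RHSf
    have i1 : IntervalIntegrable s2 volume 0 1 := by
      rw [intervalIntegrable_iff, Set.uIoc_of_le zero_le_one]; exact hs2μ
    have i2 : IntervalIntegrable (fun q => p' q * Φ q / 2) volume 0 1 := by
      rw [intervalIntegrable_iff, Set.uIoc_of_le zero_le_one]; exact hint1.div_const 2
    have i3 : IntervalIntegrable (fun q => (p q - 1) * s2 q / 2) volume 0 1 := by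
      rw [intervalIntegrable_iff, Set.uIoc_of_le zero_le_one]; exact hint2.div_const 2
    have hsplit : (∫ q in (0:ℝ)..1, RHSf q)
        = (∫ q in (0:ℝ)..1, s2 q) + ((∫ q in (0:ℝ)..1, p' q * Φ q / 2)
          + (∫ q in (0:ℝ)..1, (p q - 1) * s2 q / 2)) := by
      rw [hRHSf]
      rw [show (fun q => s2 q + p' q * Φ q / 2 + (p q - 1) * s2 q / 2)
        = fun q => s2 q + (p' q * Φ q / 2 + (p q - 1) * s2 q / 2) by funext q; ring]
      rw [intervalIntegral.integral_add i1 (i2.add i3), intervalIntegral.integral_add i2 i3]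
    have hfub := VP.fubini_swap s2 p p' s2int hp'int hrep hp1
    have hc2 : (∫ q in (0:ℝ)..1, p' q * Φ q / 2) = (∫ q in (0:ℝ)..1, p' q * Φ q) / 2 := by
      rw [intervalIntegral.integral_div]
    have hc3 : (∫ q in (0:ℝ)..1, (p q - 1) * s2 q / 2)
        = -((∫ s in (0:ℝ)..1, s2 s * (1 - p s)) / 2) := by
      rw [show (fun q => (p q - 1) * s2 q / 2) = fun q => -(s2 q * (1 - p q) / 2)
        by funext q; ring]
      rw [intervalIntegral.integral_neg, intervalIntegral.integral_div]
    have hzero2 : (∫ q in (0:ℝ)..1, p' q * Φ q / 2)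
        + (∫ q in (0:ℝ)..1, (p q - 1) * s2 q / 2) = 0 := by
      rw [hc2, hc3, hfub]; ring
    calc (∫ q in (0:ℝ)..1, Real.sqrt (p' q * xiOne' c q + p q * xiOne'' c q))
        ≤ ∫ q in (0:ℝ)..1, RHSf q := hmono
      _ = ∫ q in (0:ℝ)..1, s2 q := by rw [hsplit, hzero2, add_zero]
      _ = ∫ q in (0:ℝ)..1, Real.sqrt (xiOne'' c q) := rfl
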